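/- Let f : ℝ → ℂ be a function in L²(ℝ) such that f(x) = ∫_ℝ k(x,y) f(y) dy for every x ∈ ℝ. Write f_− = f·𝟙_{(−∞,0]}, f_+ = f·𝟙_{(0,∞)}, and f̌_−(x) = f_−(−x). Then for every x ≤ 0, f(x) = Π_{c_−}[ f_− − (ρ_+−ρ_−)· f̌_−·𝟙_{(0,∞)} + 2ρ_+·√(c_+/c_−)·(δ_{c_−/c_+} f_+)·𝟙_{(0,∞)} ](x). -/

import Mathlib

open MeasureTheory Set


/-- `sinc t = sin t / t` for `t ≠ 0`, `sinc 0 = 1`. -/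
noncomputable def sinc (t : ℝ) : ℝ := if t = 0 then 1 else Real.sin t / t

/-- The reproducing kernel of the variable-bandwidth Paley–Wiener space
`PW_{[0,Ω]}(A_p)` in the toy model, where `p = p₋` on `(-∞, 0]` and `p = p₊` on
`(0, ∞)`, with `c_± = √(Ω/p_±)` and `ρ_± = √(p_±)/(√(p₋) + √(p₊))`. -/
noncomputable def toyKernel (pm pp Ω : ℝ) (x y : ℝ) : ℝ :=
  let cm := Real.sqrt (Ω / pm)
  let cp := Real.sqrt (Ω / pp)
  let rm := Real.sqrt pm / (Real.sqrt pm + Real.sqrt pp)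
  let rp := Real.sqrt pp / (Real.sqrt pm + Real.sqrt pp)
  if x ≤ 0 then
    if y ≤ 0 then (cm / Real.pi) * (sinc (cm * (x - y)) - (rp - rm) * sinc (cm * (x + y)))
    else (2 * cp * rp / Real.pi) * sinc (cm * x - cp * y)
  else
    if y ≤ 0 then (2 * cm * rm / Real.pi) * sinc (cp * x - cm * y)
    else (cp / Real.pi) * (sinc (cp * (x - y)) + (rp - rm) * sinc (cp * (x + y)))

/-- The orthogonal projection of `L²(ℝ)` onto the Paley–Wiener space `PW_c(ℝ)`,
evaluated pointwise: `Π_c φ(x) = (c/π) ∫ sinc(c(x - y)) φ(y) dy`. -/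
noncomputable def PiProj (c : ℝ) (φ : ℝ → ℂ) (x : ℝ) : ℂ :=
  ((c / Real.pi : ℝ) : ℂ) * ∫ y : ℝ, ((sinc (c * (x - y)) : ℝ) : ℂ) * φ y

/-- The `L²`-normalized dilation `δ_a φ(x) = √a · φ(a x)`. -/
noncomputable def dil (a : ℝ) (φ : ℝ → ℂ) (x : ℝ) : ℂ :=
  ((Real.sqrt a : ℝ) : ℂ) * φ (a * x)

lemma measurable_sinc : Measurable sinc :=
  Measurable.ite (by simp) measurable_const (Real.measurable_sin.div measurable_id)

lemma sinc_sq_le (t : ℝ) : sinc t ^ 2 ≤ 2 * (1 + t ^ 2)⁻¹ := by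
  rcases eq_or_ne t 0 with h | h
  · norm_num [sinc, h]
  · have ht2 : 0 < t ^ 2 := by positivity
    have h1 : 0 < 1 + t ^ 2 := by positivity
    have hs1 : Real.sin t ^ 2 ≤ 1 := Real.sin_sq_le_one t
    have hs2 : Real.sin t ^ 2 ≤ t ^ 2 := Real.sin_sq_le_sq
    simp only [sinc, if_neg h, div_pow, ← div_eq_mul_inv]
    rw [div_le_div_iff₀ ht2 h1]
    nlinarith

lemma integrable_sinc_sq : Integrable (fun t => sinc t ^ 2) := by
  refine (integrable_inv_one_add_sq.const_mul 2).mono' ?_ ?_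
  · exact (measurable_sinc.pow_const 2).aestronglyMeasurable
  · refine Filter.Eventually.of_forall fun t => ?_
    rw [Real.norm_eq_abs, abs_of_nonneg (by positivity)]
    exact sinc_sq_le t

lemma memL2_sinc_affine (a b : ℝ) (ha : a ≠ 0) :
    MemLp (fun y : ℝ => sinc (a * y + b)) 2 volume := by
  have hm : Measurable (fun y : ℝ => sinc (a * y + b)) :=
    measurable_sinc.comp ((measurable_const_mul a).add_const b)
  rw [memLp_two_iff_integrable_sq hm.aestronglyMeasurable]
  have h1 : Integrable (fun y : ℝ => sinc (y + b) ^ 2) :=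
    integrable_sinc_sq.comp_add_right b
  have h2 := (integrable_comp_mul_left_iff (fun y : ℝ => sinc (y + b) ^ 2) ha).mpr h1
  simpa using h2

lemma memL2C_sinc_affine (a b : ℝ) (ha : a ≠ 0) :
    MemLp (fun y : ℝ => ((sinc (a * y + b) : ℝ) : ℂ)) 2 volume :=
  (memL2_sinc_affine a b ha).ofReal

lemma integrable_mul_L2 {φ ψ : ℝ → ℂ} (hφ : MemLp φ 2 volume) (hψ : MemLp ψ 2 volume) :
    Integrable (fun y => φ y * ψ y) := by
  have h2 : (1:ENNReal)/1 = 1/2 + 1/2 := by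
    rw [ENNReal.div_add_div_same]
    norm_num
    rw [ENNReal.div_self] <;> norm_num
  have h := hψ.smul hφ (p := 2) (q := 2) (r := 1)
  have : φ • ψ = fun y => φ y * ψ y := by funext y; simp [smul_eq_mul]
  rw [this] at h
  exact memLp_one_iff_integrable.mp h

private lemma main_aux (cm cp rM rP : ℝ) (hcm : 0 < cm) (hcp : 0 < cp) (f : ℝ → ℂ)
    (hf2 : MemLp f 2 volume) (x : ℝ) (hx : x ≤ 0)
    (hfx : f x = ∫ y : ℝ, (((if y ≤ 0 then
        (cm / Real.pi) * (sinc (cm * (x - y)) - (rP - rM) * sinc (cm * (x + y)))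
      else (2 * cp * rP / Real.pi) * sinc (cm * x - cp * y)) : ℝ) : ℂ) * f y) :
    f x = ((cm / Real.pi : ℝ) : ℂ) * ∫ y : ℝ, ((sinc (cm * (x - y)) : ℝ) : ℂ) *
      ((Set.Iic (0 : ℝ)).indicator f y
        - ((rP - rM : ℝ) : ℂ) *
            (Set.Ioi (0 : ℝ)).indicator (fun t => (Set.Iic (0 : ℝ)).indicator f (-t)) y
        + ((2 * rP * Real.sqrt (cp / cm) : ℝ) : ℂ) *
            (Set.Ioi (0 : ℝ)).indicator
              (dil (cm / cp) ((Set.Ioi (0 : ℝ)).indicator f)) y) := by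
  have hπ : (0:ℝ) < Real.pi := Real.pi_pos
  -- integrability of the three basic products
  have hA1 : Integrable (fun y : ℝ => ((sinc (cm * (x - y)) : ℝ) : ℂ) * f y) volume := by
    refine integrable_mul_L2 ?_ hf2
    have h := memL2C_sinc_affine (-cm) (cm * x) (neg_ne_zero.mpr hcm.ne')
    have e : (fun y : ℝ => ((sinc (cm * (x - y)) : ℝ) : ℂ))
        = fun y : ℝ => ((sinc (-cm * y + cm * x) : ℝ) : ℂ) := by
      funext y; rw [show cm * (x - y) = -cm * y + cm * x from by ring]
    rw [e]; exact h
  have hA2 : Integrable (fun y : ℝ => ((sinc (cm * (x + y)) : ℝ) : ℂ) * f y) volume := by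
    refine integrable_mul_L2 ?_ hf2
    have h := memL2C_sinc_affine cm (cm * x) hcm.ne'
    have e : (fun y : ℝ => ((sinc (cm * (x + y)) : ℝ) : ℂ))
        = fun y : ℝ => ((sinc (cm * y + cm * x) : ℝ) : ℂ) := by
      funext y; rw [show cm * (x + y) = cm * y + cm * x from by ring]
    rw [e]; exact h
  have hA3 : Integrable (fun y : ℝ => ((sinc (cm * x - cp * y) : ℝ) : ℂ) * f y) volume := by
    refine integrable_mul_L2 ?_ hf2
    have h := memL2C_sinc_affine (-cp) (cm * x) (neg_ne_zero.mpr hcp.ne')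
    have e : (fun y : ℝ => ((sinc (cm * x - cp * y) : ℝ) : ℂ))
        = fun y : ℝ => ((sinc (-cp * y + cm * x) : ℝ) : ℂ) := by
      funext y; rw [show cm * x - cp * y = -cp * y + cm * x from by ring]
    rw [e]; exact h
  set J1 : ℂ := ∫ y in Iic (0:ℝ), ((sinc (cm * (x - y)) : ℝ) : ℂ) * f y with hJ1
  set J2 : ℂ := ∫ y in Iic (0:ℝ), ((sinc (cm * (x + y)) : ℝ) : ℂ) * f y with hJ2
  set J3 : ℂ := ∫ y in Ioi (0:ℝ), ((sinc (cm * x - cp * y) : ℝ) : ℂ) * f y with hJ3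
  -- LHS evaluation
  have hL : f x = ((cm / Real.pi : ℝ) : ℂ) * J1 - ((cm / Real.pi * (rP - rM) : ℝ) : ℂ) * J2
      + ((2 * cp * rP / Real.pi : ℝ) : ℂ) * J3 := by
    have hsplit : (fun y : ℝ => (((if y ≤ 0 then
          (cm / Real.pi) * (sinc (cm * (x - y)) - (rP - rM) * sinc (cm * (x + y)))
        else (2 * cp * rP / Real.pi) * sinc (cm * x - cp * y)) : ℝ) : ℂ) * f y)
        = fun y : ℝ => (Iic (0:ℝ)).indicator (fun y =>
              ((cm / Real.pi : ℝ) : ℂ) * (((sinc (cm * (x - y)) : ℝ) : ℂ) * f y)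
              - ((cm / Real.pi * (rP - rM) : ℝ) : ℂ) * (((sinc (cm * (x + y)) : ℝ) : ℂ) * f y)) y
          + (Ioi (0:ℝ)).indicator (fun y =>
              ((2 * cp * rP / Real.pi : ℝ) : ℂ) * (((sinc (cm * x - cp * y) : ℝ) : ℂ) * f y)) y := by
      funext y
      by_cases hy : y ≤ 0
      · rw [indicator_of_mem (mem_Iic.mpr hy), indicator_of_notMem (by simpa using hy),
          if_pos hy, add_zero]
        push_cast
        ring
      · rw [indicator_of_notMem (by simpa using hy), indicator_of_mem (mem_Ioi.mpr (lt_of_not_ge hy)),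
          if_neg hy, zero_add]
        push_cast
        ring
    have hI1 : Integrable ((Iic (0:ℝ)).indicator (fun y =>
          ((cm / Real.pi : ℝ) : ℂ) * (((sinc (cm * (x - y)) : ℝ) : ℂ) * f y)
          - ((cm / Real.pi * (rP - rM) : ℝ) : ℂ) * (((sinc (cm * (x + y)) : ℝ) : ℂ) * f y))) volume :=
      ((hA1.const_mul _).sub (hA2.const_mul _)).indicator measurableSet_Iic
    have hI2 : Integrable ((Ioi (0:ℝ)).indicator (fun y =>
          ((2 * cp * rP / Real.pi : ℝ) : ℂ) * (((sinc (cm * x - cp * y) : ℝ) : ℂ) * f y))) volume :=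
      (hA3.const_mul _).indicator measurableSet_Ioi
    rw [hfx, hsplit, integral_add hI1 hI2, integral_indicator measurableSet_Iic,
      integral_indicator measurableSet_Ioi,
      integral_sub ((hA1.const_mul _).integrableOn) ((hA2.const_mul _).integrableOn),
      integral_const_mul, integral_const_mul, integral_const_mul]
  -- RHS evaluation
  set G : ℝ → ℂ := (Iio (0:ℝ)).indicator (fun t => ((sinc (cm * (x + t)) : ℝ) : ℂ) * f t) with hG
  set H : ℝ → ℂ := (Ioi (0:ℝ)).indicator (fun t =>
      ((Real.sqrt (cm / cp) : ℝ) : ℂ) * (((sinc (cm * x - cp * t) : ℝ) : ℂ) * f t)) with hH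
  have hGint : Integrable G volume := hA2.indicator measurableSet_Iio
  have hHint : Integrable H volume := (hA3.const_mul _).indicator measurableSet_Ioi
  -- pointwise identity for the RHS integrand
  have hstep : (fun y : ℝ => ((sinc (cm * (x - y)) : ℝ) : ℂ) *
      ((Set.Iic (0 : ℝ)).indicator f y
        - ((rP - rM : ℝ) : ℂ) *
            (Set.Ioi (0 : ℝ)).indicator (fun t => (Set.Iic (0 : ℝ)).indicator f (-t)) y
        + ((2 * rP * Real.sqrt (cp / cm) : ℝ) : ℂ) *
            (Set.Ioi (0 : ℝ)).indicator
              (dil (cm / cp) ((Set.Ioi (0 : ℝ)).indicator f)) y))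
      = fun y : ℝ =>
        (Iic (0:ℝ)).indicator (fun t => ((sinc (cm * (x - t)) : ℝ) : ℂ) * f t) y
        - ((rP - rM : ℝ) : ℂ) * G (-y)
        + ((2 * rP * Real.sqrt (cp / cm) : ℝ) : ℂ) * H ((cm / cp) * y) := by
    funext y
    by_cases hy : y ≤ 0
    · have h1 : y ∈ Iic (0:ℝ) := mem_Iic.mpr hy
      have h2 : y ∉ Ioi (0:ℝ) := by simpa using hy
      have h3 : -y ∉ Iio (0:ℝ) := by simp; linarith
      have h4 : (cm / cp) * y ∉ Ioi (0:ℝ) := by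
        simp only [mem_Ioi, not_lt]
        exact mul_nonpos_of_nonneg_of_nonpos (le_of_lt (div_pos hcm hcp)) hy
      rw [hG, hH]
      rw [indicator_of_mem h1, indicator_of_notMem h2, indicator_of_notMem h2,
        indicator_of_notMem h3, indicator_of_notMem h4, indicator_of_mem h1]
      ring
    · have hy' : 0 < y := lt_of_not_ge hy
      have h1 : y ∉ Iic (0:ℝ) := by simpa using hy'
      have h2 : y ∈ Ioi (0:ℝ) := mem_Ioi.mpr hy'
      have h3 : -y ∈ Iio (0:ℝ) := by simpa using hy'
      have h4 : (cm / cp) * y ∈ Ioi (0:ℝ) := mem_Ioi.mpr (mul_pos (div_pos hcm hcp) hy')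
      have h5 : -y ∈ Iic (0:ℝ) := by simp; linarith
      rw [hG, hH]
      rw [indicator_of_notMem h1, indicator_of_mem h2, indicator_of_mem h2,
        indicator_of_mem h3, indicator_of_mem h4, indicator_of_notMem h1,
        indicator_of_mem h5]
      rw [dil, indicator_of_mem (mem_Ioi.mpr (mul_pos (div_pos hcm hcp) hy'))]
      rw [show cm * (x + -y) = cm * (x - y) from by ring,
        show cm * x - cp * ((cm / cp) * y) = cm * (x - y) from by field_simp]
      ring
  -- integrability of the three RHS pieces
  have hP1int : Integrable ((Iic (0:ℝ)).indicator
      (fun t => ((sinc (cm * (x - t)) : ℝ) : ℂ) * f t)) volume :=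
    hA1.indicator measurableSet_Iic
  have hP2int : Integrable (fun y : ℝ => G (-y)) volume := hGint.comp_neg
  have hP3int : Integrable (fun y : ℝ => H ((cm / cp) * y)) volume :=
    (integrable_comp_mul_left_iff H (div_pos hcm hcp).ne').mpr hHint
  -- values of the three RHS pieces
  have e1 : ∫ y : ℝ, (Iic (0:ℝ)).indicator
      (fun t => ((sinc (cm * (x - t)) : ℝ) : ℂ) * f t) y = J1 := by
    rw [integral_indicator measurableSet_Iic]
  have e2 : ∫ y : ℝ, G (-y) = J2 := by
    rw [integral_neg_eq_self G volume, hG, integral_indicator measurableSet_Iio,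
      hJ2, integral_Iic_eq_integral_Iio]
  have e3 : ∫ y : ℝ, H ((cm / cp) * y) =
      (((cm / cp)⁻¹ : ℝ) : ℂ) * (((Real.sqrt (cm / cp) : ℝ) : ℂ) * J3) := by
    rw [Measure.integral_comp_mul_left H (cm / cp),
      abs_of_pos (inv_pos.mpr (div_pos hcm hcp)), Complex.real_smul, hH,
      integral_indicator measurableSet_Ioi, integral_const_mul]
  -- put the RHS together
  rw [hstep]
  have hadd : (∫ y : ℝ, ((Iic (0:ℝ)).indicator (fun t => ((sinc (cm * (x - t)) : ℝ) : ℂ) * f t) y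
        - ((rP - rM : ℝ) : ℂ) * G (-y)
        + ((2 * rP * Real.sqrt (cp / cm) : ℝ) : ℂ) * H ((cm / cp) * y)))
      = (∫ y : ℝ, ((Iic (0:ℝ)).indicator (fun t => ((sinc (cm * (x - t)) : ℝ) : ℂ) * f t) y
        - ((rP - rM : ℝ) : ℂ) * G (-y)))
      + ∫ y : ℝ, ((2 * rP * Real.sqrt (cp / cm) : ℝ) : ℂ) * H ((cm / cp) * y) :=
    integral_add (hP1int.sub (hP2int.const_mul _)) (hP3int.const_mul _)
  have hsub : (∫ y : ℝ, ((Iic (0:ℝ)).indicator (fun t => ((sinc (cm * (x - t)) : ℝ) : ℂ) * f t) y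
        - ((rP - rM : ℝ) : ℂ) * G (-y)))
      = (∫ y : ℝ, (Iic (0:ℝ)).indicator (fun t => ((sinc (cm * (x - t)) : ℝ) : ℂ) * f t) y)
      - ∫ y : ℝ, ((rP - rM : ℝ) : ℂ) * G (-y) :=
    integral_sub hP1int (hP2int.const_mul _)
  rw [hadd, hsub, integral_const_mul, integral_const_mul, e1, e2, e3, hL]
  -- now a pure algebraic identity
  have hsq : Real.sqrt (cp / cm) * Real.sqrt (cm / cp) = 1 := by
    rw [← Real.sqrt_mul (by positivity), show cp / cm * (cm / cp) = 1 from by field_simp]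
    exact Real.sqrt_one
  have hc2 : ((cm / Real.pi : ℝ) : ℂ) * ((rP - rM : ℝ) : ℂ) = ((cm / Real.pi * (rP - rM) : ℝ) : ℂ) := by
    push_cast; ring
  have hcoef : cm / Real.pi * (2 * rP * Real.sqrt (cp / cm) * ((cm / cp)⁻¹ * Real.sqrt (cm / cp)))
      = 2 * cp * rP / Real.pi := by
    rw [inv_div]
    field_simp
    linear_combination rP * hsq
  have hCC : ((cm / Real.pi : ℝ) : ℂ) * (((2 * rP * Real.sqrt (cp / cm) : ℝ) : ℂ) *
      ((((cm / cp)⁻¹ : ℝ) : ℂ) * (((Real.sqrt (cm / cp) : ℝ) : ℂ)))) = ((2 * cp * rP / Real.pi : ℝ) : ℂ) := by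
    rw [show ((cm / Real.pi : ℝ) : ℂ) * (((2 * rP * Real.sqrt (cp / cm) : ℝ) : ℂ) *
        ((((cm / cp)⁻¹ : ℝ) : ℂ) * (((Real.sqrt (cm / cp) : ℝ) : ℂ))))
      = ((cm / Real.pi * (2 * rP * Real.sqrt (cp / cm) * ((cm / cp)⁻¹ * Real.sqrt (cm / cp))) : ℝ) : ℂ)
      from by push_cast; ring, hcoef]
  linear_combination J2 * hc2 - J3 * hCC

/-- If `f ∈ L²(ℝ)` satisfies the reproducing identity of the toy model, then for `x ≤ 0`,
`f(x) = Π_{c₋}[f₋ - (ρ₊ - ρ₋)·f̌₋·𝟙_{(0,∞)} + 2ρ₊·√(c₊/c₋)·(δ_{c₋/c₊} f₊)·𝟙_{(0,∞)}](x)`,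
where `f₋ = f·𝟙_{(-∞,0]}`, `f₊ = f·𝟙_{(0,∞)}` and `f̌₋(x) = f₋(-x)`. -/
theorem toy_negative_part_formula (pm pp Ω : ℝ) (hpm : 0 < pm) (hpp : 0 < pp)
    (hΩ : 0 < Ω) (f : ℝ → ℂ)
    (hf2 : MeasureTheory.MemLp f 2 MeasureTheory.volume)
    (hf : ∀ x : ℝ, f x = ∫ y : ℝ, ((toyKernel pm pp Ω x y : ℝ) : ℂ) * f y) :
    ∀ x : ℝ, x ≤ 0 →
      f x = PiProj (Real.sqrt (Ω / pm))
        (fun y => (Set.Iic (0 : ℝ)).indicator f y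
          - (((Real.sqrt pp - Real.sqrt pm) / (Real.sqrt pm + Real.sqrt pp) : ℝ) : ℂ) *
              (Set.Ioi (0 : ℝ)).indicator (fun t => (Set.Iic (0 : ℝ)).indicator f (-t)) y
          + ((2 * (Real.sqrt pp / (Real.sqrt pm + Real.sqrt pp)) *
              Real.sqrt (Real.sqrt (Ω / pp) / Real.sqrt (Ω / pm)) : ℝ) : ℂ) *
              (Set.Ioi (0 : ℝ)).indicator
                (dil (Real.sqrt (Ω / pm) / Real.sqrt (Ω / pp))
                  ((Set.Ioi (0 : ℝ)).indicator f)) y) x := by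
  intro x hx
  have hcm : 0 < Real.sqrt (Ω / pm) := Real.sqrt_pos.mpr (div_pos hΩ hpm)
  have hcp : 0 < Real.sqrt (Ω / pp) := Real.sqrt_pos.mpr (div_pos hΩ hpp)
  have hker : ∀ y : ℝ, ((toyKernel pm pp Ω x y : ℝ) : ℂ)
      = (((if y ≤ 0 then
          (Real.sqrt (Ω / pm) / Real.pi) * (sinc (Real.sqrt (Ω / pm) * (x - y))
            - (Real.sqrt pp / (Real.sqrt pm + Real.sqrt pp)
                - Real.sqrt pm / (Real.sqrt pm + Real.sqrt pp))
              * sinc (Real.sqrt (Ω / pm) * (x + y)))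
        else (2 * Real.sqrt (Ω / pp) * (Real.sqrt pp / (Real.sqrt pm + Real.sqrt pp)) / Real.pi)
          * sinc (Real.sqrt (Ω / pm) * x - Real.sqrt (Ω / pp) * y)) : ℝ) : ℂ) := by
    intro y
    simp only [toyKernel, if_pos hx]
  have hfx := hf x
  simp only [hker] at hfx
  have key := main_aux (Real.sqrt (Ω / pm)) (Real.sqrt (Ω / pp))
    (Real.sqrt pm / (Real.sqrt pm + Real.sqrt pp))
    (Real.sqrt pp / (Real.sqrt pm + Real.sqrt pp)) hcm hcp f hf2 x hx hfx
  simp only [PiProj, sub_div]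
  exact key
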